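/- Let H be a complex Hilbert space, and let K and K̃ be bounded self-adjoint linear operators on H. Let λ ∈ ℝ be an eigenvalue of K and let Π denote the orthogonal projection onto the eigenspace ker(K − λ). Suppose K̃ ẽ = λ̃ ẽ with ‖ẽ‖ = 1 and λ̃ ∈ ℝ, and suppose Π ẽ ≠ 0. Then |λ − λ̃| ≤ ‖(K − K̃) ẽ‖ / ‖Π ẽ‖. -/

import Mathlib

open MeasureTheory

noncomputable section

/-- **Accuracy estimate for an eigenvalue of arbitrary multiplicity.**
`K, K̃` are bounded self-adjoint operators on a complex Hilbert space, `λ` is an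
eigenvalue of `K`, and `P` is the orthogonal projection onto the eigenspace
`ker (K − λ)` (characterized by: it maps into the eigenspace, fixes the eigenspace,
and `x − P x` is orthogonal to the eigenspace).  If `K̃ ẽ = λ̃ ẽ` with `‖ẽ‖ = 1` and
`P ẽ ≠ 0`, then `|λ − λ̃| ≤ ‖(K − K̃) ẽ‖ / ‖P ẽ‖`. -/
theorem eigenvalue_accuracy_multiple
    {H : Type*} [NormedAddCommGroup H] [InnerProductSpace ℂ H] [CompleteSpace H]
    (K K' : H →L[ℂ] H) (hK : IsSelfAdjoint K) (hK' : IsSelfAdjoint K')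
    (lam lam' : ℝ)
    (hlam : ∃ v : H, v ≠ 0 ∧ K v = (lam : ℂ) • v)
    (P : H →L[ℂ] H)
    (hPmem : ∀ x : H, K (P x) = (lam : ℂ) • P x)
    (hPfix : ∀ x : H, K x = (lam : ℂ) • x → P x = x)
    (hPorth : ∀ x y : H, K y = (lam : ℂ) • y → (inner ℂ (x - P x) y : ℂ) = 0)
    (e' : H) (he' : ‖e'‖ = 1) (hK'e' : K' e' = (lam' : ℂ) • e')
    (hPe' : P e' ≠ 0) :
    |lam - lam'| ≤ ‖(K - K') e'‖ / ‖P e'‖ := by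
  set p := P e' with hp
  have hKp : K p = (lam : ℂ) • p := hPmem e'
  have hpe : (inner ℂ p e' : ℂ) = (‖p‖ : ℂ) ^ 2 := by
    have h0 : (inner ℂ (e' - P e') p : ℂ) = 0 := hPorth e' p hKp
    have h0' : (inner ℂ p (e' - P e') : ℂ) = 0 := by
      rw [← inner_conj_symm, h0, map_zero]
    rw [inner_sub_right, sub_eq_zero] at h0'
    rw [h0', ← hp, inner_self_eq_norm_sq_to_K]
    norm_num
  have hsym : (inner ℂ p (K e') : ℂ) = inner ℂ (K p) e' :=
    ((ContinuousLinearMap.isSelfAdjoint_iff_isSymmetric.mp hK) p e').symm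
  have key : (inner ℂ p ((K - K') e') : ℂ) = ((lam : ℂ) - lam') * (‖p‖ : ℂ) ^ 2 := by
    have h1 : (inner ℂ p (K e') : ℂ) = (lam : ℂ) * (‖p‖ : ℂ) ^ 2 := by
      rw [hsym, hKp, inner_smul_left, hpe]
      simp [Complex.conj_ofReal]
    have h2 : (inner ℂ p (K' e') : ℂ) = (lam' : ℂ) * (‖p‖ : ℂ) ^ 2 := by
      rw [hK'e', inner_smul_right, hpe]
    simp only [ContinuousLinearMap.sub_apply, inner_sub_right, h1, h2]
    ring
  have hnorm : |lam - lam'| * ‖p‖ ^ 2 ≤ ‖p‖ * ‖(K - K') e'‖ := by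
    have hcs := norm_inner_le_norm (𝕜 := ℂ) p ((K - K') e')
    calc |lam - lam'| * ‖p‖ ^ 2 = ‖(inner ℂ p ((K - K') e') : ℂ)‖ := by
          rw [key]
          rw [norm_mul]
          push_cast
          rw [← Complex.ofReal_sub]
          rw [Complex.norm_real, norm_pow, Complex.norm_real, Real.norm_eq_abs,
            Real.norm_eq_abs, abs_of_nonneg (norm_nonneg p)]
      _ ≤ ‖p‖ * ‖(K - K') e'‖ := hcs
  have hppos : 0 < ‖p‖ := norm_pos_iff.mpr hPe'
  rw [le_div_iff₀ hppos]
  nlinarith [hnorm, hppos]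

end
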